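/- Let Ω ⊆ ℝ^p be open and convex, F : Ω → ℝ^p and H : Ω → ℝ be smooth (C²) functions. If there exists a smooth G : Ω → ℝ such that for all V ∈ Ω, (∂_V H)(V) · (∂_V F)(V) = (∂_V G)(V) (i.e., the row vector of partial derivatives of H composed with the Jacobian of F equals the gradient of G), then the matrix (∂²_V H)(V) × (∂_V F)(V), i.e., the product of the Hessian of H with the Jacobian of F, is symmetric at every V ∈ Ω. -/

import Mathlib

noncomputable def pd {p : ℕ} (f : (Fin p → ℝ) → ℝ) (V : Fin p → ℝ) (i : Fin p) : ℝ :=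
  fderiv ℝ f V (Pi.single i 1)

lemma pd_differentiableAt {p : ℕ} {f : (Fin p → ℝ) → ℝ} {V : Fin p → ℝ}
    (hf : ContDiffAt ℝ 2 f V) (i : Fin p) :
    DifferentiableAt ℝ (fun W => pd f W i) V := by
  have hd : DifferentiableAt ℝ (fderiv ℝ f) V :=
    (hf.fderiv_right (m := 1) (by norm_num)).differentiableAt one_ne_zero
  exact hd.clm_apply (differentiableAt_const _)

lemma pd_pd {p : ℕ} {f : (Fin p → ℝ) → ℝ} {V : Fin p → ℝ}
    (hf : ContDiffAt ℝ 2 f V) (i j : Fin p) :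
    fderiv ℝ (fun W => pd f W i) V (Pi.single j 1)
      = fderiv ℝ (fderiv ℝ f) V (Pi.single j 1) (Pi.single i 1) := by
  have hd : DifferentiableAt ℝ (fderiv ℝ f) V :=
    (hf.fderiv_right (m := 1) (by norm_num)).differentiableAt one_ne_zero
  have h1 := fderiv_clm_apply (𝕜 := ℝ) (c := fderiv ℝ f) (u := fun _ => Pi.single i (1:ℝ)) hd
    (differentiableAt_const _)
  simp only [fderiv_fun_const, Pi.zero_apply, ContinuousLinearMap.comp_zero, zero_add] at h1
  show fderiv ℝ (fun W => fderiv ℝ f W (Pi.single i 1)) V (Pi.single j 1) = _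
  rw [h1]; rfl

noncomputable def grad {p : ℕ} (H : (Fin p → ℝ) → ℝ) (V : Fin p → ℝ) : Fin p → ℝ :=
  fun i => pd H V i

noncomputable def jac {p : ℕ} (F : (Fin p → ℝ) → (Fin p → ℝ)) (V : Fin p → ℝ) :
    Matrix (Fin p) (Fin p) ℝ :=
  Matrix.of fun i j => pd (fun W => F W i) V j

noncomputable def hess {p : ℕ} (H : (Fin p → ℝ) → ℝ) (V : Fin p → ℝ) :
    Matrix (Fin p) (Fin p) ℝ :=
  Matrix.of fun i j => pd (fun W => pd H W i) V j

theorem stmt0 (p : ℕ) (Ω : Set (Fin p → ℝ)) (hΩo : IsOpen Ω) (hΩc : Convex ℝ Ω)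
    (F : (Fin p → ℝ) → (Fin p → ℝ)) (H : (Fin p → ℝ) → ℝ)
    (hF : ContDiffOn ℝ 2 F Ω) (hH : ContDiffOn ℝ 2 H Ω)
    (hcompat : ∃ G : (Fin p → ℝ) → ℝ, ContDiffOn ℝ 2 G Ω ∧
      ∀ V ∈ Ω, Matrix.vecMul (grad H V) (jac F V) = grad G V) :
    ∀ V ∈ Ω, (hess H V * jac F V).IsSymm := by
  obtain ⟨G, hG, hcomp⟩ := hcompat
  intro V hV
  have hν : Ω ∈ nhds V := hΩo.mem_nhds hV
  have hHa : ContDiffAt ℝ 2 H V := hH.contDiffAt hν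
  have hGa : ContDiffAt ℝ 2 G V := hG.contDiffAt hν
  have hFa : ∀ k, ContDiffAt ℝ 2 (fun W => F W k) V := fun k =>
    (((ContinuousLinearMap.proj k : ((Fin p → ℝ)) →L[ℝ] ℝ).contDiff).comp_contDiffOn hF).contDiffAt hν
  -- key identity from differentiating the compatibility equation
  have key : ∀ i j : Fin p,
      fderiv ℝ (fderiv ℝ G) V (Pi.single j 1) (Pi.single i 1)
      = (∑ k, fderiv ℝ (fderiv ℝ H) V (Pi.single j 1) (Pi.single k 1) * pd (fun W => F W k) V i)
        + ∑ k, pd H V k * fderiv ℝ (fderiv ℝ (fun W => F W k)) V (Pi.single j 1) (Pi.single i 1) := by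
    intro i j
    have heq : (fun W => ∑ k, pd H W k * pd (fun W' => F W' k) W i) =ᶠ[nhds V]
        (fun W => pd G W i) := by
      filter_upwards [hν] with W hW
      have := congrFun (hcomp W hW) i
      simpa [Matrix.vecMul, dotProduct, grad, jac] using this
    have hfd := Filter.EventuallyEq.fderiv_eq (𝕜 := ℝ) heq
    have hdiff : ∀ k ∈ Finset.univ, DifferentiableAt ℝ
        (fun W => pd H W k * pd (fun W' => F W' k) W i) V := fun k _ =>
      (pd_differentiableAt hHa k).mul (pd_differentiableAt (hFa k) i)
    have hsum := fderiv_fun_sum (𝕜 := ℝ) (x := V) hdiff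
    have h1 : fderiv ℝ (fun W => ∑ k, pd H W k * pd (fun W' => F W' k) W i) V (Pi.single j 1)
        = ∑ k, (pd H V k * fderiv ℝ (fun W => pd (fun W' => F W' k) W i) V (Pi.single j 1)
            + pd (fun W' => F W' k) V i * fderiv ℝ (fun W => pd H W k) V (Pi.single j 1)) := by
      rw [hsum]
      rw [ContinuousLinearMap.sum_apply]
      refine Finset.sum_congr rfl fun k _ => ?_
      rw [fderiv_fun_mul (pd_differentiableAt hHa k) (pd_differentiableAt (hFa k) i)]
      simp
    rw [← pd_pd hGa i j, ← hfd, h1]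
    rw [Finset.sum_add_distrib, add_comm]
    congr 1
    · exact Finset.sum_congr rfl fun k _ => by rw [pd_pd hHa k j, mul_comm]
    · exact Finset.sum_congr rfl fun k _ => by rw [pd_pd (hFa k) i j]
  have hsH : IsSymmSndFDerivAt ℝ H V := hHa.isSymmSndFDerivAt (by simp)
  have hsG : IsSymmSndFDerivAt ℝ G V := hGa.isSymmSndFDerivAt (by simp)
  have hsF : ∀ k, IsSymmSndFDerivAt ℝ (fun W => F W k) V := fun k =>
    (hFa k).isSymmSndFDerivAt (by simp)
  have entry : ∀ i j : Fin p, (hess H V * jac F V) i j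
      = fderiv ℝ (fderiv ℝ G) V (Pi.single i 1) (Pi.single j 1)
        - ∑ k, pd H V k * fderiv ℝ (fderiv ℝ (fun W => F W k)) V (Pi.single i 1) (Pi.single j 1) := by
    intro i j
    have h2 : (hess H V * jac F V) i j
        = ∑ k, fderiv ℝ (fderiv ℝ H) V (Pi.single i 1) (Pi.single k 1) * pd (fun W => F W k) V j := by
      rw [Matrix.mul_apply]
      refine Finset.sum_congr rfl fun k _ => ?_
      show pd (fun W => pd H W i) V k * pd (fun W => F W k) V j = _
      rw [show pd (fun W => pd H W i) V k
          = fderiv ℝ (fderiv ℝ H) V (Pi.single k 1) (Pi.single i 1) from pd_pd hHa i k,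
        hsH (Pi.single k 1) (Pi.single i 1)]
    rw [h2, eq_sub_iff_add_eq, ← key j i]
  refine Matrix.ext fun i j => ?_
  rw [Matrix.transpose_apply, entry i j, entry j i, hsG (Pi.single i 1) (Pi.single j 1)]
  congr 1
  exact Finset.sum_congr rfl fun k _ => by rw [hsF k (Pi.single i 1) (Pi.single j 1)]
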